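/- arXiv:2303.09961 — 3 statements merged into one kernel-verified Lean document; each statement's English description precedes it below -/
import Mathlib

section
/- Let (φ_t) be a semigroup in 𝔻 and Δ a petal of (φ_t). Then for all z, w ∈ Δ and all t ≤ 0, |d_𝔻(z, φ_t(z)) − d_𝔻(w, φ_t(w))| ≤ 2·d_Δ(z, w). -/
open Filter Set

/-- The inverse hyperbolic tangent. -/
noncomputable def arctanh (x : ℝ) : ℝ := (1 / 2) * Real.log ((1 + x) / (1 - x))

/-- The hyperbolic distance of the unit disc:
`d_𝔻(z, w) = arctanh |(z - w)/(1 - conj z · w)|`. -/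
noncomputable def dD (z w : ℂ) : ℝ :=
  arctanh ‖(z - w) / (1 - (starRingEnd ℂ) z * w)‖

def unitDisc : Set ℂ := {z : ℂ | ‖z‖ < 1}

noncomputable def rho (z w : ℂ) : ℝ := ‖(z - w) / (1 - (starRingEnd ℂ) z * w)‖

lemma dD_eq (z w : ℂ) : dD z w = arctanh (rho z w) := rfl

lemma normSq_identity (z w : ℂ) :
    Complex.normSq (1 - (starRingEnd ℂ) z * w) - Complex.normSq (z - w)
      = (1 - Complex.normSq z) * (1 - Complex.normSq w) := by
  simp only [Complex.normSq_apply, Complex.sub_re, Complex.sub_im, Complex.mul_re, Complex.mul_im,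
    Complex.one_re, Complex.one_im, Complex.conj_re, Complex.conj_im]
  ring

lemma normSq_lt_one {z : ℂ} (hz : z ∈ unitDisc) : Complex.normSq z < 1 := by
  have h := hz
  simp only [unitDisc, mem_setOf_eq] at h
  nlinarith [Complex.sq_norm z, norm_nonneg z]

lemma den_ne {z w : ℂ} (hz : z ∈ unitDisc) (hw : w ∈ unitDisc) :
    (1 : ℂ) - (starRingEnd ℂ) z * w ≠ 0 := by
  intro h
  have h1 : (1 : ℂ) = (starRingEnd ℂ) z * w := by linear_combination h
  have h2 : (1 : ℝ) = ‖z‖ * ‖w‖ := by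
    have := congrArg (‖·‖) h1
    simpa [norm_mul, Complex.norm_conj] using this
  simp only [unitDisc, mem_setOf_eq] at hz hw
  nlinarith [norm_nonneg z, norm_nonneg w]

lemma abs_num_lt_den {z w : ℂ} (hz : z ∈ unitDisc) (hw : w ∈ unitDisc) :
    ‖z - w‖ < ‖1 - (starRingEnd ℂ) z * w‖ := by
  rw [Complex.norm_def, Complex.norm_def]
  apply Real.sqrt_lt_sqrt (Complex.normSq_nonneg _)
  nlinarith [normSq_identity z w, normSq_lt_one hz, normSq_lt_one hw]

lemma rho_nonneg (z w : ℂ) : 0 ≤ rho z w := norm_nonneg _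

lemma rho_lt_one {z w : ℂ} (hz : z ∈ unitDisc) (hw : w ∈ unitDisc) : rho z w < 1 := by
  rw [rho, norm_div, div_lt_one]
  · exact abs_num_lt_den hz hw
  · exact norm_pos_iff.mpr (den_ne hz hw)

lemma rho_symm (z w : ℂ) : rho z w = rho w z := by
  rw [rho, rho, norm_div, norm_div]
  congr 1
  · exact norm_sub_rev _ _
  · rw [← Complex.norm_conj]
    congr 1
    simp [mul_comm]

lemma dD_symm (z w : ℂ) : dD z w = dD w z := by rw [dD_eq, dD_eq, rho_symm]

lemma arctanh_le_arctanh {a b : ℝ} (ha : 0 ≤ a) (hab : a ≤ b) (hb : b < 1) :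
    arctanh a ≤ arctanh b := by
  have h1 : (0:ℝ) < 1 - b := by linarith
  have h2 : (0:ℝ) < 1 + a := by linarith
  unfold arctanh
  have : (1 + a) / (1 - a) ≤ (1 + b) / (1 - b) := by
    rw [div_le_div_iff₀ (by linarith) h1]
    nlinarith
  have h3 : (0:ℝ) < 1 - a := by linarith
  have hpos : (0:ℝ) < (1 + a) / (1 - a) := div_pos h2 h3
  nlinarith [Real.log_le_log hpos this]

lemma arctanh_nonneg {a : ℝ} (ha : 0 ≤ a) (ha1 : a < 1) : 0 ≤ arctanh a := by
  have : arctanh 0 ≤ arctanh a := arctanh_le_arctanh le_rfl ha ha1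
  simpa [arctanh] using this

lemma arctanh_add {p q : ℝ} (hp : 0 ≤ p) (hp1 : p < 1) (hq : 0 ≤ q) (hq1 : q < 1) :
    arctanh p + arctanh q = arctanh ((p + q) / (1 + p * q)) := by
  have hpq : (0:ℝ) < 1 + p * q := by nlinarith
  have h1 : (0:ℝ) < 1 - p := by linarith
  have h2 : (0:ℝ) < 1 - q := by linarith
  have key : (1 + (p + q) / (1 + p * q)) / (1 - (p + q) / (1 + p * q))
      = ((1 + p) / (1 - p)) * ((1 + q) / (1 - q)) := by
    have e1 : 1 + (p + q) / (1 + p * q) = (1 + p) * (1 + q) / (1 + p * q) := by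
      field_simp; ring
    have e2 : 1 - (p + q) / (1 + p * q) = (1 - p) * (1 - q) / (1 + p * q) := by
      field_simp; ring
    rw [e1, e2]
    field_simp
  unfold arctanh
  rw [key, Real.log_mul (by positivity) (by positivity)]
  ring

lemma key_ineq {x y : ℂ} (hx : x ∈ unitDisc) (hy : y ∈ unitDisc) :
    ‖x - y‖ * (1 + ‖x‖ * ‖y‖)
      ≤ (‖x‖ + ‖y‖) * ‖1 - (starRingEnd ℂ) x * y‖ := by
  have hs : 0 ≤ ‖x‖ := norm_nonneg _
  have ht : 0 ≤ ‖y‖ := norm_nonneg _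
  have hs1 : ‖x‖ < 1 := hx
  have ht1 : ‖y‖ < 1 := hy
  set s := ‖x‖
  set t := ‖y‖
  set r := ((starRingEnd ℂ) x * y).re with hrdef
  have habs : ‖(starRingEnd ℂ) x * y‖ = s * t := by
    simp [norm_mul, Complex.norm_conj, s, t]
  have hr : -(s * t) ≤ r := by
    have h1 : |r| ≤ ‖(starRingEnd ℂ) x * y‖ := Complex.abs_re_le_norm _
    rw [habs] at h1
    exact neg_le_of_abs_le h1
  have e1 : (‖x - y‖) ^ 2 = s ^ 2 + t ^ 2 - 2 * r := by
    rw [Complex.sq_norm, show s ^ 2 = Complex.normSq x from (Complex.sq_norm x).symm ▸ rfl,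
      show t ^ 2 = Complex.normSq y from (Complex.sq_norm y).symm ▸ rfl]
    simp only [Complex.normSq_apply, Complex.sub_re, Complex.sub_im, Complex.mul_re,
      Complex.mul_im, Complex.conj_re, Complex.conj_im, hrdef]
    ring
  have e2 : (‖1 - (starRingEnd ℂ) x * y‖) ^ 2 = 1 + s ^ 2 * t ^ 2 - 2 * r := by
    rw [Complex.sq_norm, show s ^ 2 * t ^ 2 = Complex.normSq x * Complex.normSq y by
      rw [← Complex.sq_norm, ← Complex.sq_norm]]
    simp only [Complex.normSq_apply, Complex.sub_re, Complex.sub_im, Complex.mul_re,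
      Complex.mul_im, Complex.conj_re, Complex.conj_im, Complex.one_re, Complex.one_im, hrdef]
    ring
  have hA : 0 ≤ ‖x - y‖ * (1 + s * t) := by positivity
  have hB : 0 ≤ (s + t) * ‖1 - (starRingEnd ℂ) x * y‖ := by positivity
  have hsq : (‖x - y‖ * (1 + s * t)) ^ 2
      ≤ ((s + t) * ‖1 - (starRingEnd ℂ) x * y‖) ^ 2 := by
    rw [mul_pow, mul_pow, e1, e2]
    nlinarith [mul_nonneg (mul_nonneg (by linarith : (0:ℝ) ≤ r + s * t)
      (by nlinarith : (0:ℝ) ≤ 1 - s ^ 2)) (by nlinarith : (0:ℝ) ≤ 1 - t ^ 2)]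
  have := Real.sqrt_le_sqrt hsq
  rwa [Real.sqrt_sq hA, Real.sqrt_sq hB] at this

noncomputable def TT (a u : ℂ) : ℂ := (a - u) / (1 - (starRingEnd ℂ) a * u)

lemma abs_TT (a u : ℂ) : ‖TT a u‖ = rho a u := rfl

lemma TT_mem {a u : ℂ} (ha : a ∈ unitDisc) (hu : u ∈ unitDisc) : TT a u ∈ unitDisc := by
  show ‖TT a u‖ < 1
  rw [abs_TT]; exact rho_lt_one ha hu

lemma TT_self (a : ℂ) : TT a a = 0 := by simp [TT]

lemma conj_ne {α : ℂ} (h : α ≠ 0) : (starRingEnd ℂ) α ≠ 0 := by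
  simpa using h

lemma TT_invol {a u : ℂ} (ha : a ∈ unitDisc) (hu : u ∈ unitDisc) : TT a (TT a u) = u := by
  have d1 : (1 : ℂ) - (starRingEnd ℂ) a * u ≠ 0 := den_ne ha hu
  have d4 : (1 : ℂ) - (starRingEnd ℂ) a * a ≠ 0 := den_ne ha ha
  rw [TT, TT]
  rw [div_eq_iff]
  · field_simp [show (1:ℂ) - u * (starRingEnd ℂ) a ≠ 0 by rwa [mul_comm]]
    ring
  · rw [show (1 : ℂ) - (starRingEnd ℂ) a * ((a - u) / (1 - (starRingEnd ℂ) a * u))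
        = (1 - (starRingEnd ℂ) a * a) / (1 - (starRingEnd ℂ) a * u) by field_simp; ring]
    exact div_ne_zero d4 d1

lemma rho_TT {a z w : ℂ} (ha : a ∈ unitDisc) (hz : z ∈ unitDisc) (hw : w ∈ unitDisc) :
    rho (TT a z) (TT a w) = rho z w := by
  have d1 : (1 : ℂ) - (starRingEnd ℂ) a * z ≠ 0 := den_ne ha hz
  have d2 : (1 : ℂ) - (starRingEnd ℂ) a * w ≠ 0 := den_ne ha hw
  have d4 : (1 : ℂ) - (starRingEnd ℂ) a * a ≠ 0 := den_ne ha ha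
  have d5 : (1 : ℂ) - a * (starRingEnd ℂ) z ≠ 0 := by
    intro h
    apply d1
    have := congrArg (starRingEnd ℂ) h
    simpa [map_sub, map_mul, map_one, mul_comm] using this
  have d6 : (1 : ℂ) - (starRingEnd ℂ) z * w ≠ 0 := den_ne hz hw
  have i1 : TT a z - TT a w
      = ((w - z) * (1 - (starRingEnd ℂ) a * a)) /
        ((1 - (starRingEnd ℂ) a * z) * (1 - (starRingEnd ℂ) a * w)) := by
    rw [TT, TT]; field_simp [show (1:ℂ) - z * (starRingEnd ℂ) a ≠ 0 by rwa [mul_comm],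
      show (1:ℂ) - w * (starRingEnd ℂ) a ≠ 0 by rwa [mul_comm]]; ring
  have hconj : (starRingEnd ℂ) (TT a z) = ((starRingEnd ℂ) a - (starRingEnd ℂ) z) /
      (1 - a * (starRingEnd ℂ) z) := by
    rw [TT]; simp [norm_div, map_sub, map_mul, Complex.conj_conj]
  have i2 : 1 - (starRingEnd ℂ) (TT a z) * TT a w
      = ((1 - (starRingEnd ℂ) z * w) * (1 - (starRingEnd ℂ) a * a)) /
        ((1 - a * (starRingEnd ℂ) z) * (1 - (starRingEnd ℂ) a * w)) := by
    rw [hconj, TT]; field_simp [show (1:ℂ) - z * (starRingEnd ℂ) a ≠ 0 by rwa [mul_comm],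
      show (1:ℂ) - w * (starRingEnd ℂ) a ≠ 0 by rwa [mul_comm],
      show (1:ℂ) - (starRingEnd ℂ) z * a ≠ 0 by rwa [mul_comm]]; ring
  have habs5 : ‖1 - a * (starRingEnd ℂ) z‖
      = ‖1 - (starRingEnd ℂ) a * z‖ := by
    rw [← Complex.norm_conj (1 - (starRingEnd ℂ) a * z)]
    simp [map_sub, map_mul, mul_comm]
  have hsub : ‖w - z‖ = ‖z - w‖ := norm_sub_rev _ _
  rw [rho, rho, i1, i2]
  simp only [norm_div, norm_mul]
  rw [habs5, hsub]
  have n1 : ‖1 - (starRingEnd ℂ) a * z‖ ≠ 0 := norm_ne_zero_iff.mpr d1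
  have n2 : ‖1 - (starRingEnd ℂ) a * w‖ ≠ 0 := norm_ne_zero_iff.mpr d2
  have n4 : ‖1 - (starRingEnd ℂ) a * a‖ ≠ 0 := norm_ne_zero_iff.mpr d4
  have n6 : ‖1 - (starRingEnd ℂ) z * w‖ ≠ 0 := norm_ne_zero_iff.mpr d6
  field_simp [show ‖(1:ℂ) - z * (starRingEnd ℂ) a‖ ≠ 0 by rwa [mul_comm],
    show ‖(1:ℂ) - w * (starRingEnd ℂ) a‖ ≠ 0 by rwa [mul_comm],
    show ‖(1:ℂ) - w * (starRingEnd ℂ) z‖ ≠ 0 by rwa [mul_comm]]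


lemma dD_nonneg {z w : ℂ} (hz : z ∈ unitDisc) (hw : w ∈ unitDisc) : 0 ≤ dD z w :=
  arctanh_nonneg (rho_nonneg z w) (rho_lt_one hz hw)

lemma dD_triangle {z u w : ℂ} (hz : z ∈ unitDisc) (hu : u ∈ unitDisc) (hw : w ∈ unitDisc) :
    dD z w ≤ dD z u + dD u w := by
  have hx := TT_mem hu hz
  have hy := TT_mem hu hw
  have hs : 0 ≤ ‖TT u z‖ := norm_nonneg _
  have ht : 0 ≤ ‖TT u w‖ := norm_nonneg _
  have hs1 : ‖TT u z‖ < 1 := hx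
  have ht1 : ‖TT u w‖ < 1 := hy
  have hden : (0:ℝ) < 1 + ‖TT u z‖ * ‖TT u w‖ := by nlinarith
  have hzw : rho z w = rho (TT u z) (TT u w) := (rho_TT hu hz hw).symm
  have hq : rho (TT u z) (TT u w)
      ≤ (‖TT u z‖ + ‖TT u w‖) /
        (1 + ‖TT u z‖ * ‖TT u w‖) := by
    rw [rho, norm_div, div_le_div_iff₀ (norm_pos_iff.mpr (den_ne hx hy)) hden]
    exact key_ineq hx hy
  have hlt : (‖TT u z‖ + ‖TT u w‖) /
      (1 + ‖TT u z‖ * ‖TT u w‖) < 1 := by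
    rw [div_lt_one hden]; nlinarith
  have step : dD z w ≤ arctanh ((‖TT u z‖ + ‖TT u w‖) /
      (1 + ‖TT u z‖ * ‖TT u w‖)) := by
    rw [dD_eq, hzw]
    exact arctanh_le_arctanh (rho_nonneg _ _) hq hlt
  rw [← arctanh_add hs hs1 ht ht1] at step
  calc dD z w ≤ arctanh (‖TT u z‖) + arctanh (‖TT u w‖) := step
    _ = dD u z + dD u w := by rw [dD_eq, dD_eq, abs_TT, abs_TT]
    _ = dD z u + dD u w := by rw [dD_symm u z]

lemma ball_eq_unitDisc : Metric.ball (0:ℂ) 1 = unitDisc := by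
  ext z
  simp [Metric.mem_ball, Complex.dist_eq, unitDisc]

lemma TT_diffOn {a : ℂ} (ha : a ∈ unitDisc) : DifferentiableOn ℂ (TT a) unitDisc := by
  apply DifferentiableOn.div
  · exact (differentiable_const a).sub differentiable_id |>.differentiableOn
  · exact ((differentiable_const (1:ℂ)).sub ((differentiable_const _).mul differentiable_id)).differentiableOn
  · exact fun u hu => den_ne ha hu

lemma TT_zero {z : ℂ} : TT z 0 = z := by simp [TT]

lemma schwarz_pick {f : ℂ → ℂ} (hf : DifferentiableOn ℂ f unitDisc)
    (hmaps : MapsTo f unitDisc unitDisc)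
    {z w : ℂ} (hz : z ∈ unitDisc) (hw : w ∈ unitDisc) : rho (f z) (f w) ≤ rho z w := by
  have hfz : f z ∈ unitDisc := hmaps hz
  have hmem : MapsTo (TT z) unitDisc unitDisc := fun u hu => TT_mem hz hu
  set h : ℂ → ℂ := fun ζ => TT (f z) (f (TT z ζ)) with hh
  have hdiff : DifferentiableOn ℂ h unitDisc :=
    (TT_diffOn hfz).comp (hf.comp (TT_diffOn hz) hmem) (fun u hu => hmaps (hmem hu))
  have hmaps' : MapsTo h unitDisc unitDisc := fun u hu => TT_mem hfz (hmaps (hmem hu))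
  have h0 : h 0 = 0 := by
    simp only [hh, TT_zero]
    exact TT_self (f z)
  have hζ : TT z w ∈ unitDisc := TT_mem hz hw
  have hb : ‖h (TT z w)‖ ≤ ‖TT z w‖ := by
    apply Complex.norm_le_norm_of_mapsTo_ball
    · rw [ball_eq_unitDisc]; exact hdiff
    · rw [← ball_eq_unitDisc] at hmaps'; exact hmaps'.mono_right Metric.ball_subset_closedBall
    · exact h0
    · exact hζ
  have hval : h (TT z w) = TT (f z) (f w) := by
    simp only [hh, TT_invol hz hw]
  rw [hval] at hb
  rw [← abs_TT, ← abs_TT]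
  exact hb

lemma dD_schwarz_pick {f : ℂ → ℂ} (hf : DifferentiableOn ℂ f unitDisc)
    (hmaps : MapsTo f unitDisc unitDisc)
    {z w : ℂ} (hz : z ∈ unitDisc) (hw : w ∈ unitDisc) : dD (f z) (f w) ≤ dD z w := by
  rw [dD_eq, dD_eq]
  exact arctanh_le_arctanh (rho_nonneg _ _) (schwarz_pick hf hmaps hz hw) (rho_lt_one hz hw)

lemma inv_diffOn {U V : Set ℂ} {f G : ℂ → ℂ} (hU : IsOpen U) (hUc : IsPreconnected U)
    (hV : IsOpen V) (hf : DifferentiableOn ℂ f U) (hbij : Set.BijOn f U V)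
    (hGmaps : Set.MapsTo G V U) (hfG : ∀ a ∈ V, f (G a) = a) :
    DifferentiableOn ℂ G V := by
  have han : AnalyticOnNhd ℂ f U := hf.analyticOnNhd hU
  have hGf : ∀ x ∈ U, G (f x) = x := fun x hx =>
    hbij.injOn (hGmaps (hbij.mapsTo hx)) hx (hfG _ (hbij.mapsTo hx))
  -- open mapping
  have hopen : ∀ s ⊆ U, IsOpen s → IsOpen (f '' s) := by
    rcases han.is_constant_or_isOpen hUc with ⟨c, hc⟩ | hop
    · intro s hs hso
      rcases s.eq_empty_or_nonempty with rfl | ⟨x, hx⟩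
      · simp
      · exfalso
        obtain ⟨r, hr0, hball⟩ := Metric.isOpen_iff.1 hso x hx
        have hmem : x + (r : ℂ) / 2 ∈ Metric.ball x r := by
          simp only [Metric.mem_ball, Complex.dist_eq, add_sub_cancel_left]
          rw [show ((r : ℂ) / 2) = ((r / 2 : ℝ) : ℂ) by push_cast; ring, Complex.norm_real, Real.norm_eq_abs]
          rw [abs_of_pos (by linarith)]
          linarith
        have hx2 : x + (r : ℂ) / 2 ∈ s := hball hmem
        have heq : f x = f (x + (r : ℂ) / 2) := by rw [hc x (hs hx), hc _ (hs hx2)]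
        have := hbij.injOn (hs hx) (hs hx2) heq
        have hr2 : ((r : ℂ) / 2) ≠ 0 := by
          simp only [ne_eq, div_eq_zero_iff, Complex.ofReal_eq_zero, OfNat.ofNat_ne_zero, or_false]
          linarith
        exact hr2 (by linear_combination -this)
    · exact hop
  -- continuity of G on V
  have hGcont : ContinuousOn G V := by
    intro a ha
    apply ContinuousAt.continuousWithinAt
    rw [continuousAt_def]
    intro N hN
    obtain ⟨O, hON, hOopen, hxO⟩ := mem_nhds_iff.1 hN
    have himg : IsOpen (f '' (O ∩ U)) := hopen _ inter_subset_right (hOopen.inter hU)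
    have haimg : a ∈ f '' (O ∩ U) := ⟨G a, ⟨hxO, hGmaps ha⟩, hfG a ha⟩
    apply Filter.mem_of_superset (himg.mem_nhds haimg)
    rintro b ⟨u, ⟨huO, huU⟩, rfl⟩
    exact hON (by rw [hGf u huU]; exact huO)
  -- derivative nonvanishing on punctured neighborhoods
  have hderiv_ne : ∀ x ∈ U, ∀ᶠ y in nhdsWithin x {x}ᶜ, deriv f y ≠ 0 := by
    intro x hx
    rcases (han.deriv x hx).eventually_eq_zero_or_eventually_ne_zero with hev | hev
    · exfalso
      obtain ⟨r, hr0, hball⟩ := Metric.eventually_nhds_iff_ball.1 (hev.and (hU.eventually_mem hx))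
      have hdiffball : DifferentiableOn ℂ f (Metric.ball x r) :=
        hf.mono (fun y hy => (hball y hy).2)
      have hconst : f x = f (x + (r : ℂ) / 2) := by
        apply Convex.is_const_of_fderivWithin_eq_zero (convex_ball x r) hdiffball
        · intro y hy
          rw [fderivWithin_of_isOpen Metric.isOpen_ball hy, ← toSpanSingleton_deriv, (hball y hy).1]
          ext1; simp
        · exact Metric.mem_ball_self hr0
        · simp only [Metric.mem_ball, Complex.dist_eq, add_sub_cancel_left]
          rw [show ((r : ℂ) / 2) = ((r / 2 : ℝ) : ℂ) by push_cast; ring, Complex.norm_real, Real.norm_eq_abs]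
          rw [abs_of_pos (by linarith)]; linarith
      have hx2U : x + (r : ℂ) / 2 ∈ U := by
        refine (hball _ ?_).2
        simp only [Metric.mem_ball, Complex.dist_eq, add_sub_cancel_left]
        rw [show ((r : ℂ) / 2) = ((r / 2 : ℝ) : ℂ) by push_cast; ring, Complex.norm_real, Real.norm_eq_abs]
        rw [abs_of_pos (by linarith)]; linarith
      have := hbij.injOn hx hx2U hconst
      have hr2 : ((r : ℂ) / 2) ≠ 0 := by
        simp only [ne_eq, div_eq_zero_iff, Complex.ofReal_eq_zero, OfNat.ofNat_ne_zero, or_false]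
        linarith
      exact hr2 (by linear_combination -this)
    · exact hev
  -- differentiability at points with nonzero derivative
  have hdiff_at : ∀ a ∈ V, deriv f (G a) ≠ 0 → DifferentiableAt ℂ G a := by
    intro a ha hne
    have hc : ContinuousAt G a := hGcont.continuousAt (hV.mem_nhds ha)
    have hfd : HasDerivAt f (deriv f (G a)) (G a) :=
      (hf.differentiableAt (hU.mem_nhds (hGmaps ha))).hasDerivAt
    have hev : ∀ᶠ y in nhds a, f (G y) = y := by
      filter_upwards [hV.mem_nhds ha] with y hy using hfG y hy
    exact (HasDerivAt.of_local_left_inverse hc hfd hne hev).differentiableAt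
  -- conclusion
  intro a ha
  by_cases hne : deriv f (G a) ≠ 0
  · exact (hdiff_at a ha hne).differentiableWithinAt
  push_neg at hne
  have hxU : G a ∈ U := hGmaps ha
  have hpunct := hderiv_ne (G a) hxU
  rw [eventually_nhdsWithin_iff] at hpunct
  obtain ⟨O, hOprop, hOopen, hxO⟩ := eventually_nhds_iff.1 hpunct
  have himg : IsOpen (f '' (O ∩ U)) := hopen _ inter_subset_right (hOopen.inter hU)
  have haimg : a ∈ f '' (O ∩ U) := ⟨G a, ⟨hxO, hxU⟩, hfG a ha⟩
  apply DifferentiableAt.differentiableWithinAt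
  have hana : AnalyticAt ℂ G a := by
    apply Complex.analyticAt_of_differentiable_on_punctured_nhds_of_continuousAt
    · filter_upwards [nhdsWithin_le_nhds ((himg.inter hV).mem_nhds ⟨haimg, ha⟩),
        self_mem_nhdsWithin] with b hb hbne
      obtain ⟨⟨u, ⟨huO, huU⟩, rfl⟩, hbV⟩ := hb
      have hbne' : f u ≠ a := by simpa using hbne
      have hune : u ≠ G a := fun h => hbne' (by rw [h, hfG a ha])
      have hd : deriv f (G (f u)) ≠ 0 := by
        rw [hGf u huU]
        exact hOprop u huO (by simpa using hune)
      exact hdiff_at (f u) hbV hd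
    · exact hGcont.continuousAt (hV.mem_nhds ha)
  exact hana.differentiableAt


lemma isOpen_unitDisc : IsOpen unitDisc := by
  rw [← ball_eq_unitDisc]; exact Metric.isOpen_ball



/-- A one-parameter semigroup of holomorphic self-maps of the unit disc
(which is not a group): `φ 0 = id`, the semigroup property holds for
nonnegative times, and `φ t → id` locally uniformly as `t → 0⁺`. -/
structure IsSemigroupD (φ : ℝ → ℂ → ℂ) : Prop where
  mapsTo : ∀ t : ℝ, 0 ≤ t → Set.MapsTo (φ t) unitDisc unitDisc
  holo : ∀ t : ℝ, 0 ≤ t → DifferentiableOn ℂ (φ t) unitDisc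
  id0 : ∀ z ∈ unitDisc, φ 0 z = z
  comp : ∀ s t : ℝ, 0 ≤ s → 0 ≤ t → ∀ z ∈ unitDisc, φ (s + t) z = φ s (φ t z)
  cont0 : TendstoLocallyUniformlyOn (fun t : ℝ => φ t) id (nhdsWithin 0 (Set.Ioi 0)) unitDisc
  notGroup : ∃ t : ℝ, 0 < t ∧ ¬ Set.BijOn (φ t) unitDisc unitDisc

/-- The backward invariant set `W = ⋂_{t ≥ 0} φ_t(𝔻)`. -/
def backwardInvSet (φ : ℝ → ℂ → ℂ) : Set ℂ :=
  ⋂ t ∈ Set.Ici (0 : ℝ), φ t '' unitDisc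

/-- A petal: a nonempty connected component of the interior of the backward invariant set. -/
def IsPetal (φ : ℝ → ℂ → ℂ) (Δ : Set ℂ) : Prop :=
  Δ.Nonempty ∧ ∃ z ∈ interior (backwardInvSet φ),
    Δ = connectedComponentIn (interior (backwardInvSet φ)) z

/-- Proposition 3.1: for `z, w` in a petal `Δ` and `t ≤ 0`,
`|d_𝔻(z, φ_t(z)) - d_𝔻(w, φ_t(w))| ≤ 2 d_Δ(z, w)`. -/
theorem stmt1 (φ : ℝ → ℂ → ℂ) (hφ : IsSemigroupD φ) (Δ : Set ℂ) (hΔ : IsPetal φ Δ)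
    (hΔbij : ∀ t : ℝ, 0 ≤ t → Set.BijOn (φ t) Δ Δ)
    (hΔback : ∀ t : ℝ, t ≤ 0 → ∀ z ∈ Δ, φ t z ∈ Δ ∧ φ (-t) (φ t z) = z)
    (g : ℂ → ℂ) (hg : DifferentiableOn ℂ g Δ) (hgbij : Set.BijOn g Δ unitDisc)
    (z w : ℂ) (hz : z ∈ Δ) (hw : w ∈ Δ) (t : ℝ) (ht : t ≤ 0) :
    |dD z (φ t z) - dD w (φ t w)| ≤ 2 * dD (g z) (g w) := by
  obtain ⟨-, z₀, hz₀, hΔeq⟩ := hΔ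
  have hΔopen : IsOpen Δ := by rw [hΔeq]; exact isOpen_interior.connectedComponentIn
  have hΔconn : IsPreconnected Δ := by rw [hΔeq]; exact isPreconnected_connectedComponentIn
  have hΔsub : Δ ⊆ unitDisc := by
    intro x hx
    rw [hΔeq] at hx
    have h2 : x ∈ backwardInvSet φ := interior_subset (connectedComponentIn_subset _ _ hx)
    have h3 : x ∈ φ 0 '' unitDisc := Set.mem_iInter₂.1 h2 0 self_mem_Ici
    obtain ⟨y, hy, hxy⟩ := h3
    rw [hφ.id0 y hy] at hxy
    rwa [← hxy]
  -- inverse of g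
  set G := Function.invFunOn g Δ with hGdef
  have hinv := hgbij.invOn_invFunOn
  have hL : ∀ x ∈ Δ, G (g x) = x := fun x hx => hinv.1 hx
  have hR : ∀ a ∈ unitDisc, g (G a) = a := fun a ha => hinv.2 ha
  have hGmaps : MapsTo G unitDisc Δ := hgbij.surjOn.mapsTo_invFunOn
  have hGdiff : DifferentiableOn ℂ G unitDisc :=
    inv_diffOn hΔopen hΔconn isOpen_unitDisc hg hgbij hGmaps hR
  have hGmaps' : MapsTo G unitDisc unitDisc := fun a ha => hΔsub (hGmaps ha)
  -- inverse of φ (-t) on Δ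
  have hs : (0:ℝ) ≤ -t := by linarith
  have hφbij := hΔbij (-t) hs
  set P := Function.invFunOn (φ (-t)) Δ with hPdef
  have hPinv := hφbij.invOn_invFunOn
  have hPL : ∀ x ∈ Δ, P (φ (-t) x) = x := fun x hx => hPinv.1 hx
  have hPR : ∀ x ∈ Δ, φ (-t) (P x) = x := fun x hx => hPinv.2 hx
  have hPmaps : MapsTo P Δ Δ := hφbij.surjOn.mapsTo_invFunOn
  have hφdiff : DifferentiableOn ℂ (φ (-t)) Δ := (hφ.holo (-t) hs).mono hΔsub
  have hPdiff : DifferentiableOn ℂ P Δ :=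
    inv_diffOn hΔopen hΔconn hΔopen hφdiff hφbij hPmaps hPR
  have hPt : ∀ x ∈ Δ, P x = φ t x := by
    intro x hx
    obtain ⟨hmem, heq⟩ := hΔback t ht x hx
    have := hPL _ hmem
    rw [heq] at this
    exact this
  -- memberships
  have hφtz : φ t z ∈ Δ := (hΔback t ht z hz).1
  have hφtw : φ t w ∈ Δ := (hΔback t ht w hw).1
  have hzD := hΔsub hz
  have hwD := hΔsub hw
  have hφtzD := hΔsub hφtz
  have hφtwD := hΔsub hφtw
  have hgz := hgbij.mapsTo hz
  have hgw := hgbij.mapsTo hw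
  -- contraction for G : dD x y ≤ dD (g x) (g y) for x y ∈ Δ
  have contr : ∀ x ∈ Δ, ∀ y ∈ Δ, dD x y ≤ dD (g x) (g y) := by
    intro x hx y hy
    have := dD_schwarz_pick hGdiff hGmaps' (hgbij.mapsTo hx) (hgbij.mapsTo hy)
    rwa [hL x hx, hL y hy] at this
  -- the map H = g ∘ P ∘ G
  have hPGmaps : MapsTo (fun a => P (G a)) unitDisc Δ := fun a ha => hPmaps (hGmaps ha)
  have hHdiff : DifferentiableOn ℂ (fun a => g (P (G a))) unitDisc :=
    hg.comp (hPdiff.comp hGdiff hGmaps) hPGmaps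
  have hHmaps : MapsTo (fun a => g (P (G a))) unitDisc unitDisc :=
    fun a ha => hgbij.mapsTo (hPGmaps ha)
  have h2 : dD (g (φ t z)) (g (φ t w)) ≤ dD (g z) (g w) := by
    have := dD_schwarz_pick hHdiff hHmaps hgz hgw
    rw [hL z hz, hL w hw, hPt z hz, hPt w hw] at this
    exact this
  have h1 : dD z w ≤ dD (g z) (g w) := contr z hz w hw
  have h3 : dD (φ t z) (φ t w) ≤ dD (g z) (g w) :=
    le_trans (contr _ hφtz _ hφtw) h2
  -- triangle inequalities
  have t1 : dD z (φ t z) ≤ dD z w + (dD w (φ t w) + dD (φ t w) (φ t z)) :=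
    le_trans (dD_triangle hzD hwD hφtzD)
      (by linarith [dD_triangle hwD hφtwD hφtzD])
  have t2 : dD w (φ t w) ≤ dD w z + (dD z (φ t z) + dD (φ t z) (φ t w)) :=
    le_trans (dD_triangle hwD hzD hφtwD)
      (by linarith [dD_triangle hzD hφtzD hφtwD])
  have hsymm1 : dD (φ t w) (φ t z) = dD (φ t z) (φ t w) := dD_symm _ _
  have hsymm2 : dD w z = dD z w := dD_symm _ _
  rw [abs_sub_le_iff]
  constructor <;> [skip; skip] <;> nlinarith [h1, h3, t1, t2, hsymm1, hsymm2]
end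

section
/- There exist a semigroup (ψ_t) in 𝔻 and a non-regular backward orbit γ : [0, ∞) → 𝔻 of (ψ_t) such that liminf_{s → +∞} d_𝔻(γ(0), γ(s))/s² ≥ 1/4. -/
open Filter Set

namespace Stmt12Proof

/-! ### Auxiliary facts -/

lemma sub_one_ne {z : ℂ} (hz : z ∈ unitDisc) : (1 : ℂ) - z ≠ 0 := by
  intro h
  have : z = 1 := by linear_combination -h
  rw [this] at hz
  simp [unitDisc] at hz

lemma re_pos {z : ℂ} (hz : z ∈ unitDisc) : 0 < ((1 : ℂ) - z).re := by
  have h1 : z.re ≤ ‖z‖ := Complex.re_le_norm z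
  have : ‖z‖ < 1 := hz
  simp only [Complex.sub_re, Complex.one_re]
  linarith

lemma absIm_log_lt {z : ℂ} (hz : z ∈ unitDisc) :
    |(Complex.log (1 - z)).im| < Real.pi / 2 := by
  rw [Complex.log_im]
  exact Complex.abs_arg_lt_pi_div_two_iff.mpr (Or.inl (re_pos hz))

lemma memD_iff_exp (w : ℂ) :
    (1 - Complex.exp w) ∈ unitDisc ↔ Real.exp w.re < 2 * Real.cos w.im := by
  have habs : ‖Complex.exp w‖ = Real.exp w.re := Complex.norm_exp w
  have hre : (Complex.exp w).re = Real.exp w.re * Real.cos w.im := Complex.exp_re w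
  have hsq : (‖1 - Complex.exp w‖)^2
      = 1 - 2 * (Real.exp w.re * Real.cos w.im) + (Real.exp w.re)^2 := by
    rw [← hre, ← habs, Complex.sq_norm, Complex.sq_norm]
    simp [Complex.normSq_apply, Complex.sub_re, Complex.sub_im]
    ring
  have hpos : 0 < Real.exp w.re := Real.exp_pos _
  constructor
  · intro h
    have h1 : ‖1 - Complex.exp w‖ < 1 := h
    have h2 : (‖1 - Complex.exp w‖)^2 < 1 := by
      nlinarith [norm_nonneg (1 - Complex.exp w)]
    rw [hsq] at h2
    nlinarith
  · intro h
    have h2 : (‖1 - Complex.exp w‖)^2 < 1 := by rw [hsq]; nlinarith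
    have := norm_nonneg (1 - Complex.exp w)
    show ‖_‖ < 1
    nlinarith

lemma exp_re_log_lt {z : ℂ} (hz : z ∈ unitDisc) :
    Real.exp ((Complex.log (1 - z)).re) < 2 * Real.cos ((Complex.log (1 - z)).im) := by
  rw [← memD_iff_exp, Complex.exp_log (sub_one_ne hz)]
  have : (1 : ℂ) - (1 - z) = z := by ring
  rw [this]
  exact hz

open Real in
lemma core {x θ β : ℝ} (hθ : |θ| < π/2) (hx : Real.exp x < 2 * Real.cos θ)
    (hβ0 : 0 < β) (hβ1 : β ≤ 1) : Real.exp (β * x) < 2 * Real.cos (β * θ) := by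
  have hcosθ : 0 < Real.cos θ :=
    Real.cos_pos_of_mem_Ioo ⟨(abs_lt.mp hθ).1, (abs_lt.mp hθ).2⟩
  have h1 : Real.exp (β * x) = (Real.exp x) ^ β := by
    rw [Real.rpow_def_of_pos (Real.exp_pos x), Real.log_exp, mul_comm]
  have h2 : (Real.exp x) ^ β < (2 * Real.cos θ) ^ β :=
    Real.rpow_lt_rpow (Real.exp_pos x).le hx hβ0
  have h3 : (2 * Real.cos θ) ^ β = (2:ℝ) ^ β * (Real.cos θ) ^ β :=
    Real.mul_rpow (by norm_num) hcosθ.le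
  have h4 : (2:ℝ) ^ β ≤ 2 := by
    calc (2:ℝ) ^ β ≤ (2:ℝ) ^ (1:ℝ) := Real.rpow_le_rpow_of_exponent_le (by norm_num) hβ1
    _ = 2 := Real.rpow_one 2
  have h5 : (Real.cos θ) ^ β ≤ β * Real.cos θ + (1 - β) := by
    have := Real.geom_mean_le_arith_mean2_weighted hβ0.le (by linarith : (0:ℝ) ≤ 1 - β)
      hcosθ.le (zero_le_one) (by ring)
    simpa [Real.one_rpow] using this
  have h6 : β * Real.cos θ + (1 - β) ≤ Real.cos (β * θ) := by
    have hconc := strictConcaveOn_cos_Icc.concaveOn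
    have hθmem : θ ∈ Set.Icc (-(π/2)) (π/2) := by
      constructor <;> [linarith [(abs_lt.mp hθ).1]; linarith [(abs_lt.mp hθ).2]]
    have h0mem : (0:ℝ) ∈ Set.Icc (-(π/2)) (π/2) := by
      constructor <;> [linarith [Real.pi_pos]; linarith [Real.pi_pos]]
    have := hconc.2 hθmem h0mem hβ0.le (by linarith : (0:ℝ) ≤ 1 - β) (by ring)
    simpa [smul_eq_mul, Real.cos_zero] using this
  have hcosβ : 0 < β * Real.cos θ + (1 - β) := by nlinarith
  calc Real.exp (β * x) < (2:ℝ)^β * (Real.cos θ)^β := by rw [h1, ← h3]; exact h2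
    _ ≤ 2 * (Real.cos θ)^β := by
        have : (0:ℝ) ≤ (Real.cos θ)^β := Real.rpow_nonneg hcosθ.le β
        nlinarith
    _ ≤ 2 * (β * Real.cos θ + (1 - β)) := by nlinarith
    _ ≤ 2 * Real.cos (β * θ) := by nlinarith

lemma dD_eq {a b : ℝ} (h0 : 0 ≤ a) (hab : a ≤ b) (hb : b < 1) :
    dD (a : ℂ) (b : ℂ) = (1/2) * Real.log ((1-a)*(1+b)/((1+a)*(1-b))) := by
  have hb0 : 0 ≤ b := le_trans h0 hab
  have ha1 : a < 1 := lt_of_le_of_lt hab hb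
  have hd : 0 < 1 - a * b := by nlinarith
  have hcast : ((a : ℂ) - b) / (1 - (starRingEnd ℂ) (a:ℂ) * b)
      = (((a - b) / (1 - a*b) : ℝ) : ℂ) := by
    rw [Complex.conj_ofReal]
    push_cast
    ring
  rw [dD, hcast, Complex.norm_real, Real.norm_eq_abs, abs_div, abs_of_pos hd,
    abs_of_nonpos (by linarith : a - b ≤ 0)]
  rw [arctanh]
  congr 1
  have h1 : 1 + -(a-b) / (1 - a*b) = (1-a)*(1+b) / (1 - a*b) := by
    field_simp; ring
  have h2 : 1 - -(a-b) / (1 - a*b) = (1+a)*(1-b) / (1 - a*b) := by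
    field_simp; ring
  rw [h1, h2, div_div_div_cancel_right₀]
  exact hd.ne'

lemma dD_ge {a b : ℝ} (h0 : 0 ≤ a) (hab : a ≤ b) (hb : b < 1) :
    (1/2) * Real.log ((1-a)/(2*(1-b))) ≤ dD (a : ℂ) (b : ℂ) := by
  rw [dD_eq h0 hab hb]
  have ha1 : a < 1 := lt_of_le_of_lt hab hb
  have hb0 : 0 ≤ b := le_trans h0 hab
  have ha' : 0 < 1 - a := by linarith
  have hb' : 0 < 1 - b := by linarith
  have hQ : 0 < (1-a)/(2*(1-b)) := by positivity
  have hle : (1-a)/(2*(1-b)) ≤ (1-a)*(1+b)/((1+a)*(1-b)) := by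
    rw [div_le_div_iff₀ (by positivity) (by positivity)]
    nlinarith [mul_pos ha' hb']
  have := Real.log_le_log hQ hle
  linarith

/-! ### The semigroup -/

noncomputable def F (t : ℝ) (z : ℂ) : ℂ :=
  1 - Complex.exp (Real.exp (-t) * Complex.log (1 - z))

lemma F_mapsTo {t : ℝ} (ht : 0 ≤ t) : Set.MapsTo (F t) unitDisc unitDisc := by
  intro z hz
  have hβ0 : 0 < Real.exp (-t) := Real.exp_pos _
  have hβ1 : Real.exp (-t) ≤ 1 := Real.exp_le_one_iff.mpr (by linarith)
  show F t z ∈ unitDisc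
  rw [F, memD_iff_exp]
  have hre : ((Real.exp (-t) : ℂ) * Complex.log (1 - z)).re
      = Real.exp (-t) * (Complex.log (1 - z)).re := Complex.re_ofReal_mul _ _
  have him : ((Real.exp (-t) : ℂ) * Complex.log (1 - z)).im
      = Real.exp (-t) * (Complex.log (1 - z)).im := Complex.im_ofReal_mul _ _
  rw [hre, him]
  exact core (absIm_log_lt hz) (exp_re_log_lt hz) hβ0 hβ1

lemma F_holo {t : ℝ} : DifferentiableOn ℂ (F t) unitDisc := by
  intro z hz
  apply DifferentiableAt.differentiableWithinAt
  have hmem : (1 : ℂ) - z ∈ Complex.slitPlane := Or.inl (re_pos hz)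
  have h1 : DifferentiableAt ℂ (fun w : ℂ => Complex.log (1 - w)) z := by
    have := (Complex.differentiableAt_log hmem).comp z
      ((differentiableAt_const (1:ℂ)).sub differentiableAt_id)
    exact this
  exact (differentiableAt_const (1:ℂ)).sub (((h1.const_mul _)).cexp)

lemma F_id0 {z : ℂ} (hz : z ∈ unitDisc) : F 0 z = z := by
  rw [F]
  simp [Complex.exp_log (sub_one_ne hz)]

lemma log_one_sub_F {t : ℝ} {z : ℂ} (hz : z ∈ unitDisc) (ht : 0 ≤ t) :
    Complex.log (1 - F t z) = (Real.exp (-t) : ℂ) * Complex.log (1 - z) := by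
  have h1 : (1 : ℂ) - F t z = Complex.exp ((Real.exp (-t) : ℂ) * Complex.log (1 - z)) := by
    rw [F]; ring
  rw [h1]
  apply Complex.log_exp
  · have him : ((Real.exp (-t) : ℂ) * Complex.log (1 - z)).im
        = Real.exp (-t) * (Complex.log (1 - z)).im := Complex.im_ofReal_mul _ _
    rw [him]
    have hβ1 : Real.exp (-t) ≤ 1 := Real.exp_le_one_iff.mpr (by linarith)
    have hβ0 : 0 < Real.exp (-t) := Real.exp_pos _
    have h2 := absIm_log_lt hz
    have hπ := Real.pi_pos
    have : |Real.exp (-t) * (Complex.log (1 - z)).im| ≤ |(Complex.log (1 - z)).im| := by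
      rw [abs_mul, abs_of_pos hβ0]
      nlinarith [abs_nonneg ((Complex.log (1 - z)).im)]
    have := abs_lt.mp (lt_of_le_of_lt this h2)
    linarith [this.1]
  · have him : ((Real.exp (-t) : ℂ) * Complex.log (1 - z)).im
        = Real.exp (-t) * (Complex.log (1 - z)).im := Complex.im_ofReal_mul _ _
    rw [him]
    have hβ1 : Real.exp (-t) ≤ 1 := Real.exp_le_one_iff.mpr (by linarith)
    have hβ0 : 0 < Real.exp (-t) := Real.exp_pos _
    have h2 := absIm_log_lt hz
    have hπ := Real.pi_pos
    have : |Real.exp (-t) * (Complex.log (1 - z)).im| ≤ |(Complex.log (1 - z)).im| := by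
      rw [abs_mul, abs_of_pos hβ0]
      nlinarith [abs_nonneg ((Complex.log (1 - z)).im)]
    have := abs_lt.mp (lt_of_le_of_lt this h2)
    linarith [this.2]

lemma F_comp {s t : ℝ} (hs : 0 ≤ s) (ht : 0 ≤ t) {z : ℂ} (hz : z ∈ unitDisc) :
    F (s + t) z = F s (F t z) := by
  rw [show F s (F t z) = 1 - Complex.exp (Real.exp (-s) * Complex.log (1 - F t z)) from rfl,
    log_one_sub_F hz ht, F]
  congr 2
  rw [← mul_assoc]
  norm_cast
  rw [← Real.exp_add]
  ring_nf

lemma abs_log_le {ρ : ℝ} (hρ0 : 0 ≤ ρ) (hρ : ρ < 1) {y : ℂ} (hy : ‖y‖ ≤ ρ) :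
    ‖Complex.log (1 - y)‖ ≤ Real.log 2 - Real.log (1-ρ) + Real.pi := by
  have h1 : 1 - ρ ≤ ‖1 - y‖ := by
    have := norm_sub_norm_le (1 : ℂ) y
    simp only [norm_one] at this
    linarith
  have h2 : ‖1 - y‖ ≤ 2 := by
    have := norm_sub_le (1 : ℂ) y
    simp only [norm_one] at this
    linarith
  have hpos : 0 < 1 - ρ := by linarith
  have hlog1 : Real.log (1-ρ) ≤ Real.log (‖1 - y‖) := Real.log_le_log hpos h1
  have hlog2 : Real.log (‖1 - y‖) ≤ Real.log 2 :=
    Real.log_le_log (lt_of_lt_of_le hpos h1) h2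
  have hneg : Real.log (1-ρ) ≤ 0 := Real.log_nonpos hpos.le (by linarith)
  have hl2 : 0 ≤ Real.log 2 := Real.log_nonneg (by norm_num)
  have hre : |(Complex.log (1 - y)).re| ≤ Real.log 2 - Real.log (1-ρ) := by
    rw [Complex.log_re, abs_le]
    constructor <;> linarith
  have him : |(Complex.log (1 - y)).im| ≤ Real.pi := by
    rw [Complex.log_im]; exact Complex.abs_arg_le_pi _
  calc ‖Complex.log (1 - y)‖
      ≤ |(Complex.log (1 - y)).re| + |(Complex.log (1 - y)).im| :=
        Complex.norm_le_abs_re_add_abs_im _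
    _ ≤ _ := by linarith

lemma F_cont0 : TendstoLocallyUniformlyOn (fun t : ℝ => F t) id
    (nhdsWithin 0 (Set.Ioi 0)) unitDisc := by
  rw [Metric.tendstoLocallyUniformlyOn_iff]
  intro ε hε x hx
  have hx1 : ‖x‖ < 1 := hx
  set ρ : ℝ := (1 + ‖x‖) / 2 with hρdef
  have hρ0 : 0 ≤ ρ := by positivity
  have hρ1 : ρ < 1 := by simp only [hρdef]; linarith
  set M : ℝ := Real.log 2 - Real.log (1-ρ) + Real.pi with hMdef
  have hM0 : 0 < M := by
    have h1 : Real.log (1-ρ) ≤ 0 := Real.log_nonpos (by linarith) (by linarith)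
    have h2 : 0 ≤ Real.log 2 := Real.log_nonneg (by norm_num)
    have := Real.pi_pos
    simp only [hMdef]; linarith
  set δ : ℝ := min (ε / (2 * M * Real.exp M + 1)) (1 / (M + 1)) with hδdef
  have hδ0 : 0 < δ := by
    apply lt_min
    · positivity
    · positivity
  refine ⟨Metric.ball x ((1 - ‖x‖)/2) ∩ unitDisc, ?_, ?_⟩
  · rw [Set.inter_comm]
    exact inter_mem_nhdsWithin _ (Metric.ball_mem_nhds x (by linarith))
  have hIoo : Set.Ioo (0:ℝ) δ ∈ nhdsWithin 0 (Set.Ioi 0) :=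
    Ioo_mem_nhdsGT_of_mem (by constructor <;> [rfl; exact hδ0])
  filter_upwards [hIoo] with t ht y hy
  obtain ⟨hyball, hyD⟩ := hy
  have hyρ : ‖y‖ ≤ ρ := by
    have hd : dist y x < (1 - ‖x‖)/2 := hyball
    rw [Complex.dist_eq] at hd
    have : ‖y‖ ≤ ‖x‖ + ‖y - x‖ := by
      have := norm_sub_norm_le y x
      linarith
    simp only [hρdef]
    linarith
  set L : ℂ := Complex.log (1 - y) with hLdef
  have hL : ‖L‖ ≤ M := abs_log_le hρ0 hρ1 hyρ
  set β : ℝ := Real.exp (-t) with hβdef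
  have hβ0 : 0 < β := Real.exp_pos _
  have hβ1 : β ≤ 1 := Real.exp_le_one_iff.mpr (by linarith [ht.1])
  have h1β : 1 - β ≤ t := by
    have := Real.add_one_le_exp (-t)
    simp only [hβdef]; linarith
  have h1β0 : 0 ≤ 1 - β := by linarith
  have hexp : Complex.exp L = 1 - y := Complex.exp_log (sub_one_ne hyD)
  have hkey : id y - F t y = Complex.exp ((β:ℂ) * L) * (1 - Complex.exp (((1-β:ℝ):ℂ) * L)) := by
    rw [F, mul_sub, mul_one, ← Complex.exp_add]
    have : (β:ℂ) * L + ((1-β:ℝ):ℂ) * L = L := by push_cast; ring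
    rw [this, hexp]
    simp only [id]
    ring
  have habs1 : ‖Complex.exp ((β:ℂ) * L)‖ ≤ Real.exp M := by
    rw [Complex.norm_exp]
    apply Real.exp_le_exp.mpr
    have : ((β:ℂ) * L).re = β * L.re := Complex.re_ofReal_mul _ _
    rw [this]
    have hLre : |L.re| ≤ M := le_trans (Complex.abs_re_le_norm L) hL
    have := abs_le.mp hLre
    nlinarith [this.1, this.2]
  have habsu : ‖((1-β:ℝ):ℂ) * L‖ ≤ t * M := by
    rw [norm_mul, Complex.norm_real, Real.norm_eq_abs, abs_of_nonneg h1β0]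
    have := norm_nonneg L
    nlinarith
  have htM : t * M ≤ 1 := by
    have ht2 : t < 1 / (M + 1) := lt_of_lt_of_le ht.2 (min_le_right _ _)
    have : t * (M+1) < 1 := by
      rw [← lt_div_iff₀ (by linarith : (0:ℝ) < M + 1)]
      exact ht2
    nlinarith [ht.1.le]
  have habs2 : ‖1 - Complex.exp (((1-β:ℝ):ℂ) * L)‖ ≤ 2 * (t * M) := by
    have h := Complex.norm_exp_sub_one_le (x := ((1-β:ℝ):ℂ) * L) (le_trans habsu htM)
    have : ‖1 - Complex.exp (((1-β:ℝ):ℂ) * L)‖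
        = ‖Complex.exp (((1-β:ℝ):ℂ) * L) - 1‖ := by
      rw [← norm_neg]; ring_nf
    rw [this]
    calc ‖Complex.exp (((1-β:ℝ):ℂ) * L) - 1‖
        ≤ 2 * ‖((1-β:ℝ):ℂ) * L‖ := h
      _ ≤ 2 * (t * M) := by linarith
  rw [dist_eq_norm, hkey, norm_mul]
  have ht1 : t < ε / (2 * M * Real.exp M + 1) := lt_of_lt_of_le ht.2 (min_le_left _ _)
  have hfin : t * (2 * M * Real.exp M + 1) < ε := by
    rw [← lt_div_iff₀ (by positivity : (0:ℝ) < 2 * M * Real.exp M + 1)]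
    exact ht1
  calc ‖Complex.exp ((β:ℂ) * L)‖ * ‖1 - Complex.exp (((1-β:ℝ):ℂ) * L)‖
      ≤ Real.exp M * (2 * (t * M)) := by
        apply mul_le_mul habs1 habs2 (norm_nonneg _) (Real.exp_pos _).le
    _ < ε := by nlinarith [ht.1, Real.exp_pos M, hM0]

lemma F_notGroup : ∃ t : ℝ, 0 < t ∧ ¬ Set.BijOn (F t) unitDisc unitDisc := by
  refine ⟨1, one_pos, ?_⟩
  intro hbij
  set u : ℂ := Complex.mk (1/2) (-(1/2)) with hudef
  have hureim : u.re = 1/2 ∧ u.im = -(1/2) := ⟨rfl, rfl⟩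
  have huD : u ∈ unitDisc := by
    show ‖u‖ < 1
    have h2 : (‖u‖)^2 = 1/2 := by
      rw [Complex.sq_norm, Complex.normSq_apply, hureim.1, hureim.2]; norm_num
    nlinarith [norm_nonneg u]
  obtain ⟨z, hzD, hzu⟩ := hbij.surjOn huD
  have hv : Complex.exp ((Real.exp (-1:ℝ) : ℂ) * Complex.log (1 - z)) = 1 - u := by
    have : F 1 z = u := hzu
    rw [F] at this
    linear_combination -this
  have hvre : (1 - u).re = 1/2 := by
    simp [hureim.1, Complex.sub_re, Complex.one_re]; norm_num
  have hvim : (1 - u).im = 1/2 := by simp [hureim.2, Complex.sub_im, Complex.one_im]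
  set β : ℝ := Real.exp (-1:ℝ) with hβdef
  have hβ0 : 0 < β := Real.exp_pos _
  have hβhalf : β < 1/2 := by
    rw [hβdef, Real.exp_neg]
    rw [inv_lt_comm₀ (Real.exp_pos 1) (by norm_num)]
    have := Real.exp_one_gt_d9
    norm_num
    linarith
  have hL := absIm_log_lt hzD
  have hβ1 : β ≤ 1 := by linarith
  have hπ := Real.pi_pos
  have him : ((β:ℂ) * Complex.log (1 - z)).im = β * (Complex.log (1 - z)).im :=
    Complex.im_ofReal_mul _ _
  have habsim : |((β:ℂ) * Complex.log (1 - z)).im| < Real.pi / 2 := by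
    rw [him, abs_mul, abs_of_pos hβ0]
    nlinarith [abs_nonneg ((Complex.log (1 - z)).im), hL]
  have hlog : (β:ℂ) * Complex.log (1 - z) = Complex.log (1 - u) := by
    rw [← hv, Complex.log_exp]
    · linarith [(abs_lt.mp habsim).1]
    · linarith [(abs_lt.mp habsim).2]
  have harg : Complex.arg (1 - u) = Real.pi / 4 := by
    have h4 : (1 - u) = Complex.mk (1/2) (1/2) := by
      apply Complex.ext <;> simp [hvre, hvim]
    have h2 : Real.sqrt 2 * Real.sqrt 2 = 2 := Real.mul_self_sqrt (by norm_num)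
    have hne : Real.sqrt 2 ≠ 0 := by positivity
    have habs : ‖Complex.mk (1/2) (1/2)‖ = Real.sqrt 2 / 2 := by
      rw [Complex.norm_def, Complex.normSq_apply]
      have hh : ((Complex.mk (1/2) (1/2)).re * (Complex.mk (1/2) (1/2)).re
          + (Complex.mk (1/2) (1/2)).im * (Complex.mk (1/2) (1/2)).im : ℝ) = (2:ℝ)⁻¹ := by
        norm_num
      rw [hh, Real.sqrt_inv, inv_eq_one_div, div_eq_div_iff hne (by norm_num)]
      linarith
    rw [h4, Complex.arg]
    have hre2 : (0:ℝ) ≤ (Complex.mk (1/2) (1/2)).re := by norm_num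
    rw [if_pos hre2, habs]
    have hdiv : ((Complex.mk (1/2) (1/2)).im : ℝ) / (Real.sqrt 2/2) = Real.sqrt 2 / 2 := by
      show (1/2 : ℝ) / (Real.sqrt 2/2) = Real.sqrt 2 / 2
      rw [div_eq_div_iff (by positivity) (by norm_num)]
      linarith
    rw [hdiv, ← Real.sin_pi_div_four]
    exact Real.arcsin_sin (by linarith) (by linarith)
  rw [Complex.log_im] at hL
  have him2 : β * (1 - z).arg = Real.pi / 4 := by
    have h5 := congrArg Complex.im hlog
    rw [him, Complex.log_im, Complex.log_im] at h5
    rw [h5, harg]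
  have : |β * (1 - z).arg| < Real.pi / 4 := by
    rw [abs_mul, abs_of_pos hβ0]
    nlinarith [abs_nonneg ((1 - z).arg), hL]
  rw [him2] at this
  rw [abs_of_pos (by linarith)] at this
  linarith

/-! ### The backward orbit -/

noncomputable def g (t : ℝ) : ℝ := 1 - Real.exp (-(Real.exp t * Real.log 2))

lemma hlog2 : 0 < Real.log 2 := Real.log_pos (by norm_num)

lemma g_pos (t : ℝ) : 0 < g t := by
  rw [g, sub_pos]
  apply Real.exp_lt_one_iff.mpr
  have := Real.exp_pos t
  nlinarith [hlog2]

lemma g_lt_one (t : ℝ) : g t < 1 := by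
  rw [g]
  have := Real.exp_pos (-(Real.exp t * Real.log 2))
  linarith

lemma g_mono : Monotone g := by
  intro s t hst
  rw [g, g, sub_le_sub_iff_left]
  apply Real.exp_le_exp.mpr
  have := Real.exp_le_exp.mpr hst
  nlinarith [hlog2, Real.exp_pos s]

lemma g_memD (t : ℝ) : ((g t : ℝ) : ℂ) ∈ unitDisc := by
  show ‖((g t : ℝ) : ℂ)‖ < 1
  rw [Complex.norm_real, Real.norm_eq_abs, abs_of_pos (g_pos t)]
  exact g_lt_one t

lemma F_g {s t : ℝ} (hs : 0 ≤ s) (hst : s ≤ t) :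
    F s ((g t : ℝ) : ℂ) = ((g (t - s) : ℝ) : ℂ) := by
  have h1 : (1 : ℂ) - ((g t : ℝ) : ℂ)
      = Complex.exp (((-(Real.exp t * Real.log 2) : ℝ)) : ℂ) := by
    rw [← Complex.ofReal_exp, g]
    push_cast
    ring
  have hπ := Real.pi_pos
  have h2 : Complex.log ((1 : ℂ) - ((g t : ℝ) : ℂ))
      = ((-(Real.exp t * Real.log 2) : ℝ) : ℂ) := by
    rw [h1, Complex.log_exp (by rw [Complex.ofReal_im]; linarith)
      (by rw [Complex.ofReal_im]; linarith)]
  rw [F, h2]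
  have h3 : (Real.exp (-s) : ℂ) * ((-(Real.exp t * Real.log 2) : ℝ) : ℂ)
      = ((-(Real.exp (t - s) * Real.log 2) : ℝ) : ℂ) := by
    rw [← Complex.ofReal_mul]
    congr 1
    rw [show t - s = -s + t by ring, Real.exp_add]
    ring
  rw [h3, ← Complex.ofReal_exp, g, Complex.ofReal_sub, Complex.ofReal_one, Complex.ofReal_exp]

lemma dD_g_ge {t t' : ℝ} (htt : t ≤ t') :
    (Real.exp t' * Real.log 2 - Real.exp t * Real.log 2 - Real.log 2) / 2
      ≤ dD ((g t : ℝ) : ℂ) ((g t' : ℝ) : ℂ) := by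
  have h := dD_ge (g_pos t).le (g_mono htt) (g_lt_one t')
  have hEt : 1 - g t = Real.exp (-(Real.exp t * Real.log 2)) := by rw [g]; ring
  have hEt' : 1 - g t' = Real.exp (-(Real.exp t' * Real.log 2)) := by rw [g]; ring
  have hlog : Real.log ((1 - g t) / (2 * (1 - g t')))
      = Real.exp t' * Real.log 2 - Real.exp t * Real.log 2 - Real.log 2 := by
    rw [hEt, hEt', Real.log_div (Real.exp_ne_zero _) (by positivity),
      Real.log_mul (by norm_num) (Real.exp_ne_zero _), Real.log_exp, Real.log_exp]
    ring
  rw [hlog] at h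
  linarith

lemma freq (C : ℝ) : ∃ᶠ t in Filter.atTop,
    C < dD ((g t : ℝ) : ℂ) ((g (t+1) : ℝ) : ℂ) := by
  apply Filter.Eventually.frequently
  have he1 : (1:ℝ) < Real.exp 1 := by
    have := Real.exp_one_gt_d9; linarith
  have hl2 : (0:ℝ) < Real.log 2 := Real.log_pos (by norm_num)
  have htend : Filter.Tendsto (fun t : ℝ =>
      (Real.exp (t+1) * Real.log 2 - Real.exp t * Real.log 2 - Real.log 2) / 2)
      Filter.atTop Filter.atTop := by
    have h0 : (fun t : ℝ =>
        (Real.exp (t+1) * Real.log 2 - Real.exp t * Real.log 2 - Real.log 2) / 2)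
        = fun t : ℝ => (Real.exp t * (((Real.exp 1 - 1) * Real.log 2)/2)
            + (- Real.log 2 / 2)) := by
      funext t
      rw [Real.exp_add]
      ring
    rw [h0]
    apply Filter.tendsto_atTop_add_const_right
    apply Filter.Tendsto.atTop_mul_const
      (by nlinarith : (0:ℝ) < ((Real.exp 1 - 1) * Real.log 2)/2)
    exact Real.tendsto_exp_atTop
  filter_upwards [htend.eventually_gt_atTop C] with t ht
  exact lt_of_lt_of_le ht (dD_g_ge (by linarith))

lemma liminf_part :
    ((1 / 4 : ℝ) : EReal) ≤
      Filter.liminf (fun s : ℝ => ((dD ((g 0 : ℝ) : ℂ) ((g s : ℝ) : ℂ) / s ^ 2 : ℝ) : EReal))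
        Filter.atTop := by
  have hev : ∀ᶠ s : ℝ in Filter.atTop, ((1/4 : ℝ) : EReal)
      ≤ ((dD ((g 0 : ℝ) : ℂ) ((g s : ℝ) : ℂ) / s ^ 2 : ℝ) : EReal) := by
    filter_upwards [Filter.eventually_ge_atTop (100:ℝ)] with s hs
    rw [EReal.coe_le_coe_iff]
    have hd := dD_g_ge (show (0:ℝ) ≤ s by linarith)
    have hl2 : (0.6931471803:ℝ) < Real.log 2 := Real.log_two_gt_d9
    have hl2' : Real.log 2 ≤ 1 := by
      have := Real.log_le_sub_one_of_pos (show (0:ℝ) < 2 by norm_num); linarith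
    have hexps : (1 + s/3)^3 ≤ Real.exp s := by
      have h1 : s/3 + 1 ≤ Real.exp (s/3) := Real.add_one_le_exp (s/3)
      have h2 : (s/3 + 1)^3 ≤ (Real.exp (s/3))^3 := by
        apply pow_le_pow_left₀ (by linarith) h1
      have h3 : (Real.exp (s/3))^3 = Real.exp s := by
        rw [← Real.exp_nat_mul]
        norm_num
        ring_nf
      calc (1 + s/3)^3 = (s/3 + 1)^3 := by ring
        _ ≤ (Real.exp (s/3))^3 := h2
        _ = Real.exp s := h3
    have he0 : Real.exp (0:ℝ) = 1 := Real.exp_zero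
    have hl2pos : (0:ℝ) < Real.log 2 := by linarith
    have hkey : s^2 / 4
        ≤ (Real.exp s * Real.log 2 - Real.exp 0 * Real.log 2 - Real.log 2) / 2 := by
      rw [he0, one_mul]
      have hE : s^3/27 ≤ Real.exp s := by nlinarith
      have h100 : 100 * s^2 ≤ s^3 := by nlinarith
      have h1 : s^3/27 * Real.log 2 ≤ Real.exp s * Real.log 2 :=
        mul_le_mul_of_nonneg_right hE hl2pos.le
      have h2 : 100 * s^2 / 27 * Real.log 2 ≤ s^3/27 * Real.log 2 := by
        apply mul_le_mul_of_nonneg_right _ hl2pos.le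
        linarith
      have h3 : s^2 ≤ 100 * s^2/27 * Real.log 2 := by nlinarith [sq_nonneg s]
      have h4 : (4:ℝ) ≤ s^2 := by nlinarith
      linarith
    have hdd : s^2/4 ≤ dD ((g 0 : ℝ) : ℂ) ((g s : ℝ) : ℂ) := le_trans hkey hd
    rw [le_div_iff₀ (by positivity : (0:ℝ) < s^2)]
    linarith
  calc ((1/4 : ℝ) : EReal)
      = Filter.liminf (fun _ : ℝ => ((1/4 : ℝ) : EReal)) Filter.atTop :=
        (Filter.liminf_const _).symm
    _ ≤ _ := Filter.liminf_le_liminf hev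

end Stmt12Proof

/-- Proposition 6.1, second part: there exist a semigroup and a non-regular backward
orbit `γ` with `liminf_{s → +∞} d_𝔻(γ(0), γ(s))/s² ≥ 1/4`. -/
theorem stmt12 : ∃ (ψ : ℝ → ℂ → ℂ) (γ : ℝ → ℂ),
    IsSemigroupD ψ ∧
    ContinuousOn γ (Set.Ici (0 : ℝ)) ∧
    (∀ t : ℝ, 0 ≤ t → γ t ∈ unitDisc) ∧
    (∀ s t : ℝ, 0 ≤ s → s ≤ t → ψ s (γ t) = γ (t - s)) ∧
    (∀ C : ℝ, ∃ᶠ t in Filter.atTop, C < dD (γ t) (γ (t + 1))) ∧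
    ((1 / 4 : ℝ) : EReal) ≤
      Filter.liminf (fun s : ℝ => ((dD (γ 0) (γ s) / s ^ 2 : ℝ) : EReal))
        Filter.atTop := by
  refine ⟨Stmt12Proof.F, fun t => ((Stmt12Proof.g t : ℝ) : ℂ), ?_, ?_, ?_, ?_, ?_, ?_⟩
  · exact ⟨fun t ht => Stmt12Proof.F_mapsTo ht, fun t _ => Stmt12Proof.F_holo,
      fun z hz => Stmt12Proof.F_id0 hz, fun s t hs ht z hz => Stmt12Proof.F_comp hs ht hz,
      Stmt12Proof.F_cont0, Stmt12Proof.F_notGroup⟩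
  · have : Continuous fun t : ℝ => ((Stmt12Proof.g t : ℝ) : ℂ) := by
      apply Complex.continuous_ofReal.comp
      unfold Stmt12Proof.g
      fun_prop
    exact this.continuousOn
  · exact fun t _ => Stmt12Proof.g_memD t
  · intro s t hs hst
    exact Stmt12Proof.F_g hs hst
  · exact Stmt12Proof.freq
  · exact Stmt12Proof.liminf_part
end

section
/- Let Ω ⊊ ℂ be a simply connected domain containing a horizontal half-plane H = {z ∈ ℂ : Im z > a} for some a ∈ ℝ, and let w ∈ H. Then for every biholomorphism f : Ω → 𝔻, limsup_{t → −∞} d_𝔻(f(w), f(w + t))/log(−t) ≤ 1. (This is the upper-bound half of the proof of Theorem 4.3: d_Ω(w, w+t) ≤ d_H(w, w+t) = arctanh(−t/√(4δ² + t²)) with δ = Im w − a, and the latter is asymptotic to log(−t) as t → −∞.) -/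
open Filter Set

/-- `Ω` is a simply connected domain, a proper subdomain of `ℂ`. -/
def IsSCDomain (Ω : Set ℂ) : Prop :=
  IsOpen Ω ∧ IsConnected Ω ∧ Ω ≠ Set.univ ∧ SimplyConnectedSpace Ω

lemma one_sub_conj_mul_ne_zero {b u : ℂ} (hb : ‖b‖ < 1) (hu : ‖u‖ < 1) :
    (1 - (starRingEnd ℂ) b * u) ≠ 0 := by
  intro h
  have h1 : (starRingEnd ℂ) b * u = 1 := by linear_combination -h
  have : ‖(starRingEnd ℂ) b * u‖ = 1 := by simp [h1]
  rw [norm_mul, Complex.norm_conj] at this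
  nlinarith [norm_nonneg b, norm_nonneg u]

lemma mobius_lt_one {b u : ℂ} (hb : ‖b‖ < 1) (hu : ‖u‖ < 1) :
    ‖(u - b) / (1 - (starRingEnd ℂ) b * u)‖ < 1 := by
  have hden := one_sub_conj_mul_ne_zero hb hu
  have key : Complex.normSq (1 - (starRingEnd ℂ) b * u) - Complex.normSq (u - b)
      = (1 - Complex.normSq b) * (1 - Complex.normSq u) := by
    simp [Complex.normSq_apply, Complex.sub_re, Complex.sub_im, Complex.mul_re, Complex.mul_im,
      Complex.conj_re, Complex.conj_im, Complex.one_re, Complex.one_im]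
    ring
  have hb2 : Complex.normSq b < 1 := by
    have := Complex.sq_norm b; nlinarith [norm_nonneg b]
  have hu2 : Complex.normSq u < 1 := by
    have := Complex.sq_norm u; nlinarith [norm_nonneg u]
  have hlt : Complex.normSq (u - b) < Complex.normSq (1 - (starRingEnd ℂ) b * u) := by nlinarith
  have habs : ‖u - b‖ < ‖1 - (starRingEnd ℂ) b * u‖ := by
    have h1 := Complex.sq_norm (u - b)
    have h2 := Complex.sq_norm (1 - (starRingEnd ℂ) b * u)
    nlinarith [norm_nonneg (u - b), norm_nonneg (1 - (starRingEnd ℂ) b * u)]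
  rw [norm_div, div_lt_one (lt_of_le_of_lt (norm_nonneg _) habs)] at *
  exact habs

lemma arctanh_mono {x y : ℝ} (hx : 0 ≤ x) (hxy : x ≤ y) (hy : y < 1) :
    arctanh x ≤ arctanh y := by
  unfold arctanh
  have h1 : (0:ℝ) < 1 - y := by linarith
  have h2 : (0:ℝ) < 1 - x := by linarith
  have hq : (1 + x) / (1 - x) ≤ (1 + y) / (1 - y) := by
    rw [div_le_div_iff₀ h2 h1]; nlinarith
  have hpos : (0:ℝ) < (1 + x) / (1 - x) := by positivity
  have := Real.log_le_log hpos hq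
  linarith

lemma arctanh_rho_le {u δ s : ℝ} (hu : 0 ≤ u) (hδ : 0 < δ) (hs : 0 < s)
    (hs2 : s ^ 2 = u ^ 2 + 4 * δ ^ 2) :
    arctanh (u / s) ≤ Real.log ((δ + u) / δ) := by
  have hsu : u < s := by nlinarith
  have hsu' : s ≤ u + 2 * δ := by nlinarith
  have hρ1 : u / s < 1 := by rw [div_lt_one hs]; exact hsu
  unfold arctanh
  have e1 : (1 + u / s) / (1 - u / s) = (s + u) / (s - u) := by
    rw [div_eq_div_iff (by nlinarith) (by nlinarith)]
    field_simp
  rw [e1]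
  have e2 : Real.log ((δ + u) / δ) = (1/2) * Real.log (((δ + u) / δ) ^ 2) := by
    rw [Real.log_pow]; push_cast; ring
  rw [e2]
  have hkey : (s + u) / (s - u) ≤ ((δ + u) / δ) ^ 2 := by
    rw [div_le_iff₀ (by linarith), div_pow, div_mul_eq_mul_div, le_div_iff₀ (by positivity)]
    nlinarith [sq_nonneg (s - u - 2*δ), sq_nonneg (s + u)]
  have hpos : (0:ℝ) < (s + u) / (s - u) := by
    apply div_pos <;> linarith
  have := Real.log_le_log hpos hkey
  linarith

lemma tendsto_log_ratio {δ : ℝ} (hδ : 0 < δ) :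
    Tendsto (fun s : ℝ => Real.log ((δ + s) / δ) / Real.log s) atTop (nhds 1) := by
  have h1 : Tendsto (fun s : ℝ => 1 + δ / s) atTop (nhds 1) := by
    have : Tendsto (fun s : ℝ => δ / s) atTop (nhds 0) :=
      tendsto_const_nhds.div_atTop tendsto_id
    simpa using tendsto_const_nhds.add this
  have h2 : Tendsto (fun s : ℝ => Real.log (1 + δ / s)) atTop (nhds 0) := by
    have := (Real.continuousAt_log (x := 1) one_ne_zero).tendsto.comp h1
    simpa [Function.comp_def] using this
  have h3 : Tendsto (fun s : ℝ => (Real.log s)⁻¹) atTop (nhds 0) :=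
    Real.tendsto_log_atTop.inv_tendsto_atTop
  have h4 : Tendsto (fun s : ℝ => 1 + (Real.log (1 + δ / s) - Real.log δ) * (Real.log s)⁻¹)
      atTop (nhds 1) := by
    have := ((h2.sub (tendsto_const_nhds (x := Real.log δ))).mul h3)
    simpa using tendsto_const_nhds.add this
  apply h4.congr'
  filter_upwards [eventually_ge_atTop (2:ℝ)] with s hs
  have hs0 : (0:ℝ) < s := by linarith
  have hls : Real.log s ≠ 0 := ne_of_gt (Real.log_pos (by linarith))
  have hds : (0:ℝ) < 1 + δ / s := by positivity
  rw [Real.log_div (by positivity) (ne_of_gt hδ)]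
  have e2 : δ + s = s * (1 + δ / s) := by field_simp; ring
  rw [e2, Real.log_mul (ne_of_gt hs0) (ne_of_gt hds)]
  field_simp
  ring

lemma psi_mem_halfplane {a : ℝ} {w : ℂ} (hw : a < w.im) {ζ : ℂ} (hζ : ‖ζ‖ < 1) :
    a < ((w - ((starRingEnd ℂ) w + 2*a*Complex.I) * ζ) / (1 - ζ)).im := by
  have hζ1 : ζ ≠ 1 := by rintro rfl; simp at hζ
  have hden : (1 - ζ) ≠ 0 := sub_ne_zero.2 (Ne.symm hζ1)
  have hN : 0 < Complex.normSq (1 - ζ) := Complex.normSq_pos.2 hden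
  have hζ2 : ζ.re ^ 2 + ζ.im ^ 2 < 1 := by
    have h := Complex.sq_norm ζ
    rw [Complex.normSq_apply] at h
    nlinarith [norm_nonneg ζ]
  rw [Complex.div_im]
  rw [div_sub_div_same, lt_div_iff₀ hN]
  simp only [Complex.sub_re, Complex.sub_im, Complex.mul_re, Complex.mul_im, Complex.add_re,
    Complex.add_im, Complex.conj_re, Complex.conj_im, Complex.I_re, Complex.I_im,
    Complex.ofReal_re, Complex.ofReal_im, Complex.one_re, Complex.one_im,
    Complex.normSq_apply, Complex.re_ofNat, Complex.im_ofNat]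
  ring_nf
  nlinarith [mul_pos (sub_pos.2 hw) (sub_pos.2 hζ2)]

/-- Upper bound half of Theorem 4.3: if `Ω` contains the half-plane `{Im z > a}`
and `w` lies in that half-plane, then
`limsup_{t → -∞} d_Ω(w, w + t)/log(-t) ≤ 1`. -/
theorem stmt14 (Ω : Set ℂ) (hΩ : IsSCDomain Ω) (a : ℝ)
    (hH : {z : ℂ | a < z.im} ⊆ Ω) (w : ℂ) (hw : a < w.im)
    (f : ℂ → ℂ) (hf : DifferentiableOn ℂ f Ω) (hfbij : Set.BijOn f Ω unitDisc) :
    Filter.limsup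
        (fun t : ℝ => ((dD (f w) (f (w + (t : ℂ))) / Real.log (-t) : ℝ) : EReal))
        Filter.atBot ≤ ((1 : ℝ) : EReal) := by
  set δ : ℝ := w.im - a with hδdef
  have hδ : 0 < δ := by simp [hδdef]; linarith
  have hDisc : unitDisc = Metric.ball (0:ℂ) 1 := by
    ext z; simp [unitDisc, Metric.mem_ball, Complex.dist_eq]
  set b : ℂ := f w with hbdef
  have hb : ‖b‖ < 1 := hfbij.mapsTo (hH hw)
  set r : ℂ := (starRingEnd ℂ) w + 2*a*Complex.I with hrdef
  set ψ : ℂ → ℂ := fun ζ => (w - r * ζ) / (1 - ζ) with hψdef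
  have hψmaps : MapsTo ψ (Metric.ball (0:ℂ) 1) Ω := by
    intro ζ hζ
    exact hH (psi_mem_halfplane hw (mem_ball_zero_iff.1 hζ))
  have hne1 : ∀ ζ : ℂ, ζ ∈ Metric.ball (0:ℂ) 1 → (1 - ζ) ≠ 0 := by
    intro ζ hζ
    rw [mem_ball_zero_iff] at hζ
    intro h
    have : ζ = 1 := by linear_combination -h
    rw [this] at hζ; simp at hζ
  have hψdiff : DifferentiableOn ℂ ψ (Metric.ball (0:ℂ) 1) := by
    apply DifferentiableOn.div
    · exact (differentiableOn_const w).sub ((differentiableOn_const r).mul differentiableOn_id)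
    · exact (differentiableOn_const 1).sub differentiableOn_id
    · exact hne1
  have hψ0 : ψ 0 = w := by simp [hψdef]
  have hFdiff : DifferentiableOn ℂ (fun ζ => f (ψ ζ)) (Metric.ball (0:ℂ) 1) :=
    hf.comp hψdiff hψmaps
  have hFmaps : ∀ ζ ∈ Metric.ball (0:ℂ) 1, ‖f (ψ ζ)‖ < 1 := by
    intro ζ hζ
    exact hfbij.mapsTo (hψmaps hζ)
  set G : ℂ → ℂ := fun ζ => (f (ψ ζ) - b) / (1 - (starRingEnd ℂ) b * f (ψ ζ)) with hGdef
  have hGdiff : DifferentiableOn ℂ G (Metric.ball (0:ℂ) 1) := by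
    apply DifferentiableOn.div
    · exact hFdiff.sub (differentiableOn_const b)
    · exact (differentiableOn_const 1).sub ((differentiableOn_const _).mul hFdiff)
    · intro ζ hζ
      exact one_sub_conj_mul_ne_zero hb (hFmaps ζ hζ)
  have hGmaps : MapsTo G (Metric.ball (0:ℂ) 1) (Metric.ball (0:ℂ) 1) := by
    intro ζ hζ
    rw [mem_ball_zero_iff]
    exact mobius_lt_one hb (hFmaps ζ hζ)
  have hG0 : G 0 = 0 := by
    simp [hGdef, hψ0, hbdef]
  -- the comparison function
  set g : ℝ → ℝ := fun t => Real.log ((δ + -t) / δ) / Real.log (-t) with hgdef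
  have hg : Tendsto g atBot (nhds 1) :=
    (tendsto_log_ratio hδ).comp tendsto_neg_atBot_atTop
  have hev : (fun t : ℝ => ((dD (f w) (f (w + (t : ℂ))) / Real.log (-t) : ℝ) : EReal))
      ≤ᶠ[atBot] fun t => ((g t : ℝ) : EReal) := by
    filter_upwards [eventually_le_atBot (-2:ℝ)] with t ht
    rw [EReal.coe_le_coe_iff]
    have ht0 : t < 0 := by linarith
    have hu : (0:ℝ) ≤ -t := by linarith
    have hlogpos : 0 < Real.log (-t) := Real.log_pos (by linarith)
    -- ζ_t
    set z : ℂ := (t : ℂ) + 2*(δ:ℂ)*Complex.I with hzdef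
    have hz0 : z ≠ 0 := by
      intro h
      have := congrArg Complex.im h
      simp [hzdef] at this
      linarith
    set ζ : ℂ := (t : ℂ) / z with hζdef
    set s : ℝ := ‖z‖ with hsdef
    have hs : 0 < s := norm_pos_iff.mpr hz0
    have hs2 : s ^ 2 = (-t) ^ 2 + 4 * δ ^ 2 := by
      rw [hsdef, Complex.sq_norm, Complex.normSq_apply]
      simp [hzdef]
      ring
    have habsζ : ‖ζ‖ = (-t) / s := by
      rw [hζdef, norm_div, Complex.norm_real, Real.norm_eq_abs, abs_of_nonpos (le_of_lt ht0)]
    have hζlt : ‖ζ‖ < 1 := by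
      rw [habsζ, div_lt_one hs]
      nlinarith
    have hζball : ζ ∈ Metric.ball (0:ℂ) 1 := mem_ball_zero_iff.2 hζlt
    -- ψ ζ = w + t
    have hwr : w - r = 2*(δ:ℂ)*Complex.I := by
      rw [hrdef]
      have h := Complex.sub_conj w
      have : w - (starRingEnd ℂ) w - 2*(a:ℂ)*Complex.I = 2*(δ:ℂ)*Complex.I := by
        rw [h, hδdef]
        push_cast
        ring
      linear_combination this
    have hψζ : ψ ζ = w + t := by
      rw [hψdef]
      simp only []
      rw [div_eq_iff (hne1 ζ hζball)]
      have hr' : r = w - 2*(δ:ℂ)*Complex.I := by linear_combination -hwr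
      have hz0' : (t : ℂ) + 2*(δ:ℂ)*Complex.I ≠ 0 := hz0
      rw [hr', hζdef, hzdef]
      field_simp [hz0']
      ring
    -- Schwarz
    have hsch := Complex.norm_le_norm_of_mapsTo_ball hGdiff (hGmaps.mono_right Metric.ball_subset_closedBall) hG0 hζlt
    rw [habsζ] at hsch
    have hGval : G ζ = (f (w + t) - b) / (1 - (starRingEnd ℂ) b * f (w + t)) := by
      rw [hGdef]; simp only []; rw [hψζ]
    rw [hGval] at hsch
    -- dD bound
    have hfwt : ‖f (w + t)‖ < 1 := by
      apply hfbij.mapsTo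
      apply hH
      simp only [mem_setOf_eq, Complex.add_im, Complex.ofReal_im]
      linarith
    have hX1 : ‖(f (w + t) - b) / (1 - (starRingEnd ℂ) b * f (w + t))‖ < 1 :=
      mobius_lt_one hb hfwt
    have hdD : dD (f w) (f (w + t))
        = arctanh ‖(f (w + t) - b) / (1 - (starRingEnd ℂ) b * f (w + t))‖ := by
      unfold dD
      rw [← hbdef, norm_div, norm_div, norm_sub_rev]
    have hρlt : (-t) / s < 1 := by rw [div_lt_one hs]; nlinarith
    have hbound : dD (f w) (f (w + t)) ≤ Real.log ((δ + -t) / δ) := by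
      rw [hdD]
      calc arctanh ‖(f (w + t) - b) / (1 - (starRingEnd ℂ) b * f (w + t))‖
          ≤ arctanh ((-t) / s) := arctanh_mono (norm_nonneg _) hsch hρlt
        _ ≤ Real.log ((δ + -t) / δ) := arctanh_rho_le hu hδ hs hs2
    rw [hgdef]
    exact (div_le_div_iff_of_pos_right hlogpos).2 hbound
  calc Filter.limsup
        (fun t : ℝ => ((dD (f w) (f (w + (t : ℂ))) / Real.log (-t) : ℝ) : EReal)) atBot
      ≤ Filter.limsup (fun t : ℝ => ((g t : ℝ) : EReal)) atBot := limsup_le_limsup hev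
    _ = ((1 : ℝ) : EReal) := Tendsto.limsup_eq (EReal.tendsto_coe.2 hg)
end
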